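/- arXiv:2202.07695 — 2 statements merged into one kernel-verified Lean document; each statement's English description precedes it below -/
import Mathlib

section
/- Let Δ ∈ ℝ, N ≥ 1, Y = (y_1 < ⋯ < y_N) ∈ ℤ^N, and r > 0 with r² + 2|Δ|r < 1. Define u : ℤ^N × ℝ → ℂ by u(x;t) = Σ_{σ ∈ S_N} (2πi)^{-N} ∮_{C_r}⋯∮_{C_r} A_σ(ξ) ∏_{i=1}^N ξ_{σ(i)}^{x_i} ∏_{i=1}^N ξ_i^{-y_i-1} e^{-itε(ξ_i)} dξ_1⋯dξ_N, now for arbitrary (not necessarily increasing) x ∈ ℤ^N. Then for every x ∈ ℤ^N the map t ↦ u(x;t) is differentiable and satisfies the free Schrödinger equation i·∂u/∂t(x;t) = Σ_{j=1}^N [u(x - e_j; t) + u(x + e_j; t)] - 2NΔ·u(x;t), where e_j denotes the j-th standard basis vector of ℤ^N. -/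
open scoped Real BigOperators

/-- `(2πi)⁻¹ ∮_{|z - c| = ρ} f(z) dz`, positively oriented circle. -/
noncomputable def cInt (c : ℂ) (ρ : ℝ) (f : ℂ → ℂ) : ℂ :=
  (2 * Real.pi * Complex.I)⁻¹ * ∮ z in C(c, ρ), f z

/-- Iterated contour integral: the `i`-th coordinate is integrated using the
functional `J i`. -/
noncomputable def iterInt : (n : ℕ) → (Fin n → ((ℂ → ℂ) → ℂ)) → ((Fin n → ℂ) → ℂ) → ℂ
  | 0, _, f => f Fin.elim0
  | n + 1, J, f => J 0 fun z => iterInt n (fun i => J i.succ) fun w => f (Fin.cons z w)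

/-- Dispersion relation `ε(ξ) = ξ + ξ⁻¹ - 2Δ`. -/
noncomputable def eps (Δ : ℝ) (ξ : ℂ) : ℂ := ξ + ξ⁻¹ - 2 * (Δ : ℂ)

/-- Yang–Yang S-matrix `S(ξ', ξ) = -(1 + ξξ' - 2Δξ')/(1 + ξξ' - 2Δξ)`. -/
noncomputable def Smat (Δ : ℂ) (ξ' ξ : ℂ) : ℂ :=
  -(1 + ξ * ξ' - 2 * Δ * ξ') / (1 + ξ * ξ' - 2 * Δ * ξ)

/-- `A_σ(ξ)`: the product of `S(ξ_β, ξ_α)` over inversions of `σ`, i.e. over all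
pairs `α < β` such that `β` appears before `α` in the list `(σ(1), …, σ(N))`. -/
noncomputable def Acoef {N : ℕ} (Δ : ℂ) (σ : Equiv.Perm (Fin N)) (ξ : Fin N → ℂ) : ℂ :=
  ∏ p ∈ Finset.univ.filter
      (fun p : Fin N × Fin N => p.1 < p.2 ∧ σ.symm p.2 < σ.symm p.1),
    Smat Δ (ξ p.2) (ξ p.1)

/-- The Bethe ansatz wave function `ψ_N(X; t)` with initial condition `Y = y`,
on small contours of radius `r`. -/
noncomputable def psi (Δ : ℝ) (N : ℕ) (r : ℝ) (y : Fin N → ℤ) (x : Fin N → ℤ) (t : ℝ) : ℂ :=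
  ∑ σ : Equiv.Perm (Fin N),
    iterInt N (fun _ => cInt 0 r) fun ξ =>
      Acoef (Δ : ℂ) σ ξ * (∏ i, ξ (σ i) ^ x i) *
        ∏ i, ξ i ^ (-y i - 1) * Complex.exp (-Complex.I * (t : ℂ) * eps Δ (ξ i))

/-! ### Auxiliary globalization gadgets -/

/-- Radial clamp onto the closed disc of radius `r`; identity on the circle of radius `r`. -/
noncomputable def clampC (r : ℝ) (z : ℂ) : ℂ := ((r / max r ‖z‖ : ℝ) : ℂ) * z

/-- Globally continuous substitute for `z⁻¹` on the circle of radius `r`. -/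
noncomputable def invS (r : ℝ) (z : ℂ) : ℂ := (starRingEnd ℂ) z * ((r : ℂ) ^ 2)⁻¹

/-- Globally continuous substitute for `z ^ k` (`k : ℤ`) on the circle of radius `r`. -/
noncomputable def zpS (r : ℝ) (k : ℤ) (z : ℂ) : ℂ :=
  clampC r z ^ k.toNat * invS r (clampC r z) ^ (-k).toNat

/-- Globally continuous substitute for `eps` on the circle of radius `r`. -/
noncomputable def epsS (Δ r : ℝ) (z : ℂ) : ℂ :=
  clampC r z + invS r (clampC r z) - 2 * (Δ : ℂ)

lemma continuous_clampC {r : ℝ} (hr : 0 < r) : Continuous (clampC r) := by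
  apply Continuous.mul _ continuous_id
  apply Complex.continuous_ofReal.comp
  exact continuous_const.div (continuous_const.max continuous_norm)
    (fun z => ne_of_gt (lt_of_lt_of_le hr (le_max_left _ _)))

lemma norm_clampC_le {r : ℝ} (hr : 0 < r) (z : ℂ) : ‖clampC r z‖ ≤ r := by
  have hM : 0 < max r ‖z‖ := lt_of_lt_of_le hr (le_max_left _ _)
  rw [clampC, norm_mul, Complex.norm_real, Real.norm_eq_abs,
    abs_of_nonneg (div_nonneg hr.le hM.le), div_mul_eq_mul_div, div_le_iff₀ hM]
  have := le_max_right r ‖z‖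
  nlinarith [norm_nonneg z]

lemma clampC_eq {r : ℝ} (hr : 0 < r) {z : ℂ} (hz : ‖z‖ = r) : clampC r z = z := by
  rw [clampC, hz, max_self, div_self hr.ne']
  simp

lemma continuous_invS (r : ℝ) : Continuous (invS r) :=
  (Complex.continuous_conj).mul continuous_const

lemma invS_eq {r : ℝ} (hr : 0 < r) {z : ℂ} (hz : ‖z‖ = r) : invS r z = z⁻¹ := by
  have hz0 : z ≠ 0 := by
    intro h; rw [h, norm_zero] at hz; exact hr.ne hz
  refine eq_inv_of_mul_eq_one_left ?_
  have key : (starRingEnd ℂ) z * z = ((r : ℂ)) ^ 2 := by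
    rw [mul_comm, Complex.mul_conj, Complex.normSq_eq_norm_sq, hz]
    push_cast; ring
  have hr0 : ((r : ℂ)) ^ 2 ≠ 0 := by
    apply pow_ne_zero; exact_mod_cast hr.ne'
  calc invS r z * z = ((starRingEnd ℂ) z * z) * (((r : ℂ)) ^ 2)⁻¹ := by rw [invS]; ring
    _ = 1 := by rw [key, mul_inv_cancel₀ hr0]

lemma continuous_zpS {r : ℝ} (hr : 0 < r) (k : ℤ) : Continuous (zpS r k) :=
  ((continuous_clampC hr).pow _).mul
    (((continuous_invS r).comp (continuous_clampC hr)).pow _)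

lemma zpS_eq {r : ℝ} (hr : 0 < r) (k : ℤ) {z : ℂ} (hz : ‖z‖ = r) : zpS r k z = z ^ k := by
  rw [zpS, clampC_eq hr hz, invS_eq hr hz]
  cases k with
  | ofNat n => simp [zpow_natCast]
  | negSucc n =>
      have h1 : (-Int.negSucc n).toNat = n + 1 := by
        rw [Int.neg_negSucc]; rfl
      simp [zpow_negSucc, inv_pow, h1]

lemma continuous_epsS {r : ℝ} (hr : 0 < r) (Δ : ℝ) : Continuous (epsS Δ r) :=
  (((continuous_clampC hr).add ((continuous_invS r).comp (continuous_clampC hr))).sub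
    continuous_const)

lemma epsS_eq {r : ℝ} (hr : 0 < r) (Δ : ℝ) {z : ℂ} (hz : ‖z‖ = r) : epsS Δ r z = eps Δ z := by
  rw [epsS, clampC_eq hr hz, invS_eq hr hz, eps]

lemma denom_ne_zero {r Δ : ℝ} (hr : 0 < r) (hr1 : r ^ 2 + 2 * |Δ| * r < 1)
    {a b : ℂ} (ha : ‖a‖ ≤ r) (hb : ‖b‖ ≤ r) : 1 + a * b - 2 * (Δ : ℂ) * a ≠ 0 := by
  intro h
  have h1 : (1 : ℂ) = -(a * b - 2 * (Δ : ℂ) * a) := by linear_combination h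
  have h2 : (1 : ℝ) ≤ r ^ 2 + 2 * |Δ| * r := by
    have := congrArg norm h1
    rw [norm_one, norm_neg] at this
    calc (1 : ℝ) = ‖a * b - 2 * (Δ : ℂ) * a‖ := this
      _ ≤ ‖a * b‖ + ‖2 * (Δ : ℂ) * a‖ := norm_sub_le _ _
      _ ≤ r ^ 2 + 2 * |Δ| * r := by
          rw [norm_mul, norm_mul, norm_mul, Complex.norm_real, Real.norm_eq_abs]
          have h2 : ‖(2 : ℂ)‖ = 2 := by simp
          rw [h2, pow_two]
          have := norm_nonneg a
          have := norm_nonneg b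
          have := abs_nonneg Δ
          nlinarith
  linarith

/-! ### Structural lemmas about `iterInt` over circles -/

lemma iterInt_congr {r : ℝ} (hr : 0 ≤ r) : ∀ (n : ℕ) (f g : (Fin n → ℂ) → ℂ),
    (∀ ξ, (∀ i, ‖ξ i‖ = r) → f ξ = g ξ) →
    iterInt n (fun _ => cInt 0 r) f = iterInt n (fun _ => cInt 0 r) g
  | 0, f, g, h => h _ (fun i => i.elim0)
  | (n + 1), f, g, h => by
    simp only [iterInt, cInt]
    congr 1
    refine circleIntegral.integral_congr hr fun z hz => ?_
    have hz' : ‖z‖ = r := by simpa using hz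
    exact iterInt_congr hr n _ _ fun w hw =>
      h (Fin.cons z w) (fun i => Fin.cases hz' hw i)

lemma cInt_const_mul (c : ℂ) (ρ : ℝ) (a : ℂ) (f : ℂ → ℂ) :
    cInt c ρ (fun z => a * f z) = a * cInt c ρ f := by
  unfold cInt
  have : (∮ z in C(c, ρ), a * f z) = a * ∮ z in C(c, ρ), f z := by
    simpa [smul_eq_mul] using circleIntegral.integral_smul (𝕜 := ℂ) a f c ρ
  rw [this]; ring

lemma iterInt_const_mul {r : ℝ} (a : ℂ) : ∀ (n : ℕ) (f : (Fin n → ℂ) → ℂ),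
    iterInt n (fun _ => cInt 0 r) (fun ξ => a * f ξ)
      = a * iterInt n (fun _ => cInt 0 r) f
  | 0, f => rfl
  | (n + 1), f => by
    simp only [iterInt]
    have h : ∀ z : ℂ,
        (iterInt n (fun _ => cInt 0 r) fun w => a * f (Fin.cons z w))
          = a * iterInt n (fun _ => cInt 0 r) fun w => f (Fin.cons z w) :=
      fun z => iterInt_const_mul a n _
    simp only [h]
    exact cInt_const_mul _ _ _ _

lemma iterInt_zero {r : ℝ} (n : ℕ) :
    iterInt n (fun _ => cInt 0 r) (fun _ => 0) = 0 := by
  have := iterInt_const_mul (r := r) 0 n (fun _ => (0 : ℂ))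
  simpa using this

lemma iterInt_param_continuous {r : ℝ} : ∀ (n : ℕ) {X : Type} [TopologicalSpace X]
    (F : X → (Fin n → ℂ) → ℂ), Continuous (fun p : X × (Fin n → ℂ) => F p.1 p.2) →
    Continuous fun x => iterInt n (fun _ => cInt 0 r) (F x)
  | 0, X, _, F, hF => by
    have : (fun x => iterInt 0 (fun _ => cInt 0 r) (F x)) = fun x => F x Fin.elim0 := rfl
    rw [this]
    exact hF.comp (continuous_id.prodMk continuous_const)
  | (n + 1), X, _, F, hF => by
    have hcons : Continuous fun p : ℂ × (Fin n → ℂ) => Fin.cons p.1 p.2 (α := fun _ => ℂ) := by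
      apply continuous_pi
      intro i
      refine Fin.cases ?_ ?_ i
      · exact continuous_fst
      · intro j
        exact (continuous_apply j).comp continuous_snd
    have hinner : Continuous fun p : (X × ℂ) × (Fin n → ℂ) =>
        F p.1.1 (Fin.cons p.1.2 p.2) := by
      have : Continuous fun p : (X × ℂ) × (Fin n → ℂ) =>
          ((p.1.1, Fin.cons p.1.2 p.2) : X × (Fin (n+1) → ℂ)) :=
        (continuous_fst.comp continuous_fst).prodMk
          (hcons.comp ((continuous_snd.comp continuous_fst).prodMk continuous_snd))
      exact hF.comp this
    have hIH : Continuous fun q : X × ℂ =>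
        iterInt n (fun _ => cInt 0 r) (fun w => F q.1 (Fin.cons q.2 w)) :=
      iterInt_param_continuous n (fun (q : X × ℂ) w => F q.1 (Fin.cons q.2 w)) hinner
    simp only [iterInt, cInt, circleIntegral]
    apply continuous_const.mul
    apply intervalIntegral.continuous_parametric_intervalIntegral_of_continuous'
      (μ := MeasureTheory.volume)
      (f := fun x θ => deriv (circleMap 0 r) θ •
        iterInt n (fun _ => cInt 0 r) fun w => F x (Fin.cons (circleMap 0 r θ) w))
    have h1 : Continuous fun p : X × ℝ => deriv (circleMap 0 r) p.2 := by
      simp only [deriv_circleMap]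
      exact ((continuous_circleMap 0 r).comp continuous_snd).mul continuous_const
    have h2 : Continuous fun p : X × ℝ =>
        iterInt n (fun _ => cInt 0 r) fun w => F p.1 (Fin.cons (circleMap 0 r p.2) w) :=
      hIH.comp (continuous_fst.prodMk ((continuous_circleMap 0 r).comp continuous_snd))
    exact h1.smul h2

lemma continuous_consP {n : ℕ} :
    Continuous fun p : ℂ × (Fin n → ℂ) => (Fin.cons p.1 p.2 : Fin (n + 1) → ℂ) :=
  continuous_pi fun i =>
    Fin.cases continuous_fst (fun j => (continuous_apply j).comp continuous_snd) i

lemma continuous_consL {n : ℕ} (z : ℂ) :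
    Continuous fun w : Fin n → ℂ => (Fin.cons z w : Fin (n + 1) → ℂ) :=
  continuous_consP.comp (continuous_const.prodMk continuous_id)

lemma inner_continuous {r : ℝ} {n : ℕ} (f : (Fin (n + 1) → ℂ) → ℂ) (hf : Continuous f) :
    Continuous fun z : ℂ =>
      iterInt n (fun _ => cInt 0 r) (fun w => f (Fin.cons z w)) :=
  iterInt_param_continuous n (fun z w => f (Fin.cons z w)) (hf.comp continuous_consP)

lemma inner_circleIntegrable {r : ℝ} (hr : 0 < r) {n : ℕ} (f : (Fin (n + 1) → ℂ) → ℂ)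
    (hf : Continuous f) :
    CircleIntegrable (fun z : ℂ =>
      iterInt n (fun _ => cInt 0 r) (fun w => f (Fin.cons z w))) 0 r :=
  (inner_continuous f hf).continuousOn.circleIntegrable hr.le

lemma norm_two_pi_I_inv : ‖(2 * (Real.pi : ℂ) * Complex.I)⁻¹‖ = (2 * Real.pi)⁻¹ := by
  rw [norm_inv, norm_mul, norm_mul, Complex.norm_I, mul_one]
  rw [Complex.norm_real, Real.norm_eq_abs, abs_of_pos Real.pi_pos]
  norm_num

lemma iterInt_norm_le {r : ℝ} (hr : 0 < r) : ∀ (n : ℕ) (f : (Fin n → ℂ) → ℂ),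
    Continuous f → ∀ M : ℝ, 0 ≤ M → (∀ ξ, (∀ i, ‖ξ i‖ = r) → ‖f ξ‖ ≤ M) →
    ‖iterInt n (fun _ => cInt 0 r) f‖ ≤ r ^ n * M
  | 0, f, hf, M, hM, h => by
    simpa [iterInt] using h _ (fun i => i.elim0)
  | (n + 1), f, hf, M, hM, h => by
    simp only [iterInt, cInt]
    rw [norm_mul, norm_two_pi_I_inv]
    have hπ : 0 < Real.pi := Real.pi_pos
    have hbig : ‖∮ z in C(0, r), iterInt n (fun _ => cInt 0 r)
        fun w => f (Fin.cons z w)‖ ≤ 2 * Real.pi * r * (r ^ n * M) := by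
      apply circleIntegral.norm_integral_le_of_norm_le_const hr.le
      intro z hz
      have hz' : ‖z‖ = r := by simpa using hz
      exact iterInt_norm_le hr n _ (hf.comp (continuous_consL z)) M hM
        (fun w hw => h (Fin.cons z w) (fun i => Fin.cases hz' hw i))
    calc (2 * Real.pi)⁻¹ * ‖∮ z in C(0, r), iterInt n (fun _ => cInt 0 r)
          fun w => f (Fin.cons z w)‖
        ≤ (2 * Real.pi)⁻¹ * (2 * Real.pi * r * (r ^ n * M)) := by
          apply mul_le_mul_of_nonneg_left hbig
          positivity
      _ = r ^ (n + 1) * M := by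
          field_simp
          ring

lemma cInt_add {c : ℂ} {ρ : ℝ} {f g : ℂ → ℂ} (hf : CircleIntegrable f c ρ)
    (hg : CircleIntegrable g c ρ) :
    cInt c ρ (fun z => f z + g z) = cInt c ρ f + cInt c ρ g := by
  unfold cInt
  have h : (∮ z in C(c, ρ), (f z + g z)) = (∮ z in C(c, ρ), f z) + ∮ z in C(c, ρ), g z := by
    simp only [circleIntegral, smul_add, intervalIntegral.integral_add hf.out hg.out]
  rw [h]
  ring

lemma iterInt_add {r : ℝ} (hr : 0 < r) : ∀ (n : ℕ) (f g : (Fin n → ℂ) → ℂ),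
    Continuous f → Continuous g →
    iterInt n (fun _ => cInt 0 r) (fun ξ => f ξ + g ξ)
      = iterInt n (fun _ => cInt 0 r) f + iterInt n (fun _ => cInt 0 r) g
  | 0, f, g, hf, hg => rfl
  | (n + 1), f, g, hf, hg => by
    simp only [iterInt]
    have h : ∀ z : ℂ,
        (iterInt n (fun _ => cInt 0 r) fun w => f (Fin.cons z w) + g (Fin.cons z w))
          = (iterInt n (fun _ => cInt 0 r) fun w => f (Fin.cons z w))
            + iterInt n (fun _ => cInt 0 r) fun w => g (Fin.cons z w) :=
      fun z => iterInt_add hr n _ _ (hf.comp (continuous_consL z)) (hg.comp (continuous_consL z))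
    simp only [h]
    exact cInt_add (inner_circleIntegrable hr f hf) (inner_circleIntegrable hr g hg)

lemma iterInt_hasDerivAt {r : ℝ} (hr : 0 < r) : ∀ (n : ℕ) (f g : (Fin n → ℂ) → ℂ),
    Continuous f → Continuous g → ∀ t₀ : ℝ,
    HasDerivAt (fun t : ℝ =>
        iterInt n (fun _ => cInt 0 r) (fun ξ => f ξ * Complex.exp (t * g ξ)))
      (iterInt n (fun _ => cInt 0 r)
        (fun ξ => f ξ * (g ξ * Complex.exp (t₀ * g ξ)))) t₀
  | 0, f, g, hf, hg, t₀ => by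
    simp only [iterInt]
    have h1 : HasDerivAt (fun w : ℂ => Complex.exp (w * g Fin.elim0))
        (Complex.exp ((t₀ : ℂ) * g Fin.elim0) * (1 * g Fin.elim0)) (t₀ : ℂ) :=
      ((hasDerivAt_id ((t₀ : ℂ))).mul_const (g Fin.elim0)).cexp
    have h2 := (h1.comp_ofReal).const_mul (f Fin.elim0)
    exact h2.congr_deriv (by ring)
  | (n + 1), f, g, hf, hg, t₀ => by
    classical
    have hT : IsCompact (Set.pi Set.univ fun _ : Fin (n + 1) => Metric.sphere (0 : ℂ) r) :=
      isCompact_univ_pi fun _ => isCompact_sphere 0 r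
    obtain ⟨Mf, hMf⟩ := hT.exists_bound_of_continuousOn hf.continuousOn
    obtain ⟨Mg, hMg⟩ := hT.exists_bound_of_continuousOn hg.continuousOn
    set Mf' : ℝ := max Mf 0 with hMf'def
    set Mg' : ℝ := max Mg 0 with hMg'def
    have hmem : ∀ ξ : Fin (n + 1) → ℂ, (∀ i, ‖ξ i‖ = r) →
        ξ ∈ Set.pi Set.univ fun _ : Fin (n + 1) => Metric.sphere (0 : ℂ) r := by
      intro ξ hξ i _
      simpa using hξ i
    have hMf'' : ∀ ξ, (∀ i, ‖ξ i‖ = r) → ‖f ξ‖ ≤ Mf' :=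
      fun ξ hξ => le_trans (hMf ξ (hmem ξ hξ)) (le_max_left _ _)
    have hMg'' : ∀ ξ, (∀ i, ‖ξ i‖ = r) → ‖g ξ‖ ≤ Mg' :=
      fun ξ hξ => le_trans (hMg ξ (hmem ξ hξ)) (le_max_left _ _)
    have hMf0 : 0 ≤ Mf' := le_max_right _ _
    have hMg0 : 0 ≤ Mg' := le_max_right _ _
    set B : ℝ := Mf' * (Mg' * Real.exp ((|t₀| + 1) * Mg')) with hBdef
    have hB0 : 0 ≤ B := by positivity
    set φ : ℝ → ℂ → ℂ := fun t z => iterInt n (fun _ => cInt 0 r)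
      fun w => f (Fin.cons z w) * Complex.exp ((t : ℂ) * g (Fin.cons z w)) with hφdef
    set φ' : ℝ → ℂ → ℂ := fun t z => iterInt n (fun _ => cInt 0 r)
      fun w => f (Fin.cons z w) * (g (Fin.cons z w) * Complex.exp ((t : ℂ) * g (Fin.cons z w)))
      with hφ'def
    have hφcont : ∀ t : ℝ, Continuous fun θ : ℝ =>
        deriv (circleMap 0 r) θ • φ t (circleMap 0 r θ) := by
      intro t
      have hker : Continuous fun θ : ℝ => deriv (circleMap 0 r) θ := by
        have hd : (fun θ : ℝ => deriv (circleMap 0 r) θ)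
            = fun θ => circleMap 0 r θ * Complex.I := funext fun θ => deriv_circleMap _ _ _
        rw [hd]; exact (continuous_circleMap 0 r).mul continuous_const
      apply hker.smul
      exact (inner_continuous (fun ξ => f ξ * Complex.exp ((t : ℂ) * g ξ))
          (hf.mul (Complex.continuous_exp.comp (continuous_const.mul hg)))).comp
          (continuous_circleMap 0 r)
    have hφ'cont : ∀ t : ℝ, Continuous fun θ : ℝ =>
        deriv (circleMap 0 r) θ • φ' t (circleMap 0 r θ) := by
      intro t
      have hker : Continuous fun θ : ℝ => deriv (circleMap 0 r) θ := by
        have hd : (fun θ : ℝ => deriv (circleMap 0 r) θ)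
            = fun θ => circleMap 0 r θ * Complex.I := funext fun θ => deriv_circleMap _ _ _
        rw [hd]; exact (continuous_circleMap 0 r).mul continuous_const
      apply hker.smul
      exact (inner_continuous
          (fun ξ => f ξ * (g ξ * Complex.exp ((t : ℂ) * g ξ)))
          (hf.mul (hg.mul (Complex.continuous_exp.comp (continuous_const.mul hg))))).comp
          (continuous_circleMap 0 r)
    have hnormz : ∀ θ : ℝ, ‖circleMap 0 r θ‖ = r := by
      intro θ
      rw [norm_circleMap_zero, abs_of_pos hr]
    have hφ'bound : ∀ (x : ℝ), x ∈ Metric.ball t₀ 1 → ∀ θ : ℝ,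
        ‖φ' x (circleMap 0 r θ)‖ ≤ r ^ n * B := by
      intro x hx θ
      have hxabs : |x| ≤ |t₀| + 1 := by
        rw [Metric.mem_ball, Real.dist_eq] at hx
        have := abs_sub_abs_le_abs_sub x t₀
        linarith
      set z := circleMap 0 r θ
      apply iterInt_norm_le hr n _ ((hf.comp (continuous_consL z)).mul
        (((hg.comp (continuous_consL z))).mul (Complex.continuous_exp.comp
          (continuous_const.mul (hg.comp (continuous_consL z)))))) B hB0
      intro w hw
      have htor : ∀ i, ‖(Fin.cons z w : Fin (n + 1) → ℂ) i‖ = r :=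
        fun i => Fin.cases (hnormz θ) hw i
      have h1 : ‖f (Fin.cons z w)‖ ≤ Mf' := hMf'' _ htor
      have h2 : ‖g (Fin.cons z w)‖ ≤ Mg' := hMg'' _ htor
      have h3 : ‖Complex.exp ((x : ℂ) * g (Fin.cons z w))‖
          ≤ Real.exp ((|t₀| + 1) * Mg') := by
        rw [Complex.norm_exp]
        apply Real.exp_le_exp.2
        have hre : ((x : ℂ) * g (Fin.cons z w)).re = x * (g (Fin.cons z w)).re :=
          Complex.re_ofReal_mul x _
        rw [hre]
        calc x * (g (Fin.cons z w)).re ≤ |x * (g (Fin.cons z w)).re| := le_abs_self _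
          _ = |x| * |(g (Fin.cons z w)).re| := abs_mul _ _
          _ ≤ (|t₀| + 1) * Mg' := by
              apply mul_le_mul hxabs _ (abs_nonneg _) (by positivity)
              calc |(g (Fin.cons z w)).re| ≤ ‖g (Fin.cons z w)‖ :=
                    Complex.abs_re_le_norm _
                _ = ‖g (Fin.cons z w)‖ := rfl
                _ ≤ Mg' := h2
      calc ‖f (Fin.cons z w) * (g (Fin.cons z w)
            * Complex.exp ((x : ℂ) * g (Fin.cons z w)))‖
          = ‖f (Fin.cons z w)‖ * (‖g (Fin.cons z w)‖
            * ‖Complex.exp ((x : ℂ) * g (Fin.cons z w))‖) := by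
            rw [norm_mul, norm_mul]
        _ ≤ Mf' * (Mg' * Real.exp ((|t₀| + 1) * Mg')) := by
            apply mul_le_mul h1 _ (by positivity) hMf0
            apply mul_le_mul h2 h3 (norm_nonneg _) hMg0
        _ = B := rfl
    have key := intervalIntegral.hasDerivAt_integral_of_dominated_loc_of_deriv_le
      (μ := MeasureTheory.volume) (a := 0) (b := 2 * Real.pi) (x₀ := t₀)
      (F := fun t θ => deriv (circleMap 0 r) θ • φ t (circleMap 0 r θ))
      (F' := fun t θ => deriv (circleMap 0 r) θ • φ' t (circleMap 0 r θ))
      (bound := fun _ => r * (r ^ n * B)) (Metric.ball_mem_nhds t₀ one_pos)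
      (Filter.Eventually.of_forall fun x => (hφcont x).aestronglyMeasurable)
      ((hφcont t₀).intervalIntegrable _ _)
      (hφ'cont t₀).aestronglyMeasurable
      (MeasureTheory.ae_of_all _ fun θ _ x hx => by
        rw [norm_smul, deriv_circleMap, norm_mul, Complex.norm_I, mul_one, hnormz θ]
        exact mul_le_mul_of_nonneg_left (hφ'bound x hx θ) hr.le)
      intervalIntegrable_const
      (MeasureTheory.ae_of_all _ fun θ _ x _ => by
        exact (iterInt_hasDerivAt hr n (fun w => f (Fin.cons (circleMap 0 r θ) w))
          (fun w => g (Fin.cons (circleMap 0 r θ) w))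
          (hf.comp (continuous_consL _)) (hg.comp (continuous_consL _)) x).const_smul
          (deriv (circleMap 0 r) θ))
    have h2 := key.2.const_mul ((2 * (Real.pi : ℂ) * Complex.I)⁻¹)
    simp only [iterInt, cInt, circleIntegral]
    exact h2

lemma iterInt_sub {r : ℝ} (hr : 0 < r) (n : ℕ) (f g : (Fin n → ℂ) → ℂ)
    (hf : Continuous f) (hg : Continuous g) :
    iterInt n (fun _ => cInt 0 r) (fun ξ => f ξ - g ξ)
      = iterInt n (fun _ => cInt 0 r) f - iterInt n (fun _ => cInt 0 r) g := by
  have h1 : (fun ξ => f ξ - g ξ) = fun ξ => f ξ + (-1 : ℂ) * g ξ := by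
    funext ξ; ring
  rw [h1, iterInt_add hr n f (fun ξ => (-1 : ℂ) * g ξ) hf (continuous_const.mul hg),
    iterInt_const_mul]
  ring

lemma iterInt_sum {r : ℝ} (hr : 0 < r) (n : ℕ) {ι : Type*} (s : Finset ι)
    (f : ι → (Fin n → ℂ) → ℂ) :
    (∀ i ∈ s, Continuous (f i)) →
    iterInt n (fun _ => cInt 0 r) (fun ξ => ∑ i ∈ s, f i ξ)
      = ∑ i ∈ s, iterInt n (fun _ => cInt 0 r) (f i) := by
  classical
  refine Finset.induction_on s ?_ ?_
  · intro _
    simpa using iterInt_zero (r := r) n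
  · intro a s ha ih hf
    have h1 : (fun ξ => ∑ i ∈ insert a s, f i ξ)
        = fun ξ => f a ξ + ∑ i ∈ s, f i ξ := by
      funext ξ; rw [Finset.sum_insert ha]
    rw [h1, iterInt_add hr n _ _ (hf a (Finset.mem_insert_self a s))
      (continuous_finset_sum s fun i hi => hf i (Finset.mem_insert_of_mem hi)),
      Finset.sum_insert ha, ih (fun i hi => hf i (Finset.mem_insert_of_mem hi))]

/-! ### Globalized integrand -/

/-- Globally continuous version of the Bethe integrand factor (without the
time-dependent exponential). -/
noncomputable def fGl (Δ r : ℝ) {N : ℕ} (σ : Equiv.Perm (Fin N)) (y a : Fin N → ℤ)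
    (ξ : Fin N → ℂ) : ℂ :=
  Acoef (Δ : ℂ) σ (fun i => clampC r (ξ i)) * (∏ i, zpS r (a i) (ξ (σ i))) *
    ∏ i, zpS r (-y i - 1) (ξ i)

/-- Globally continuous version of `-i ∑ ε(ξ_i)`. -/
noncomputable def gGl (Δ r : ℝ) {N : ℕ} (ξ : Fin N → ℂ) : ℂ :=
  -Complex.I * ∑ i, epsS Δ r (ξ i)

lemma continuous_fGl {Δ r : ℝ} (hr : 0 < r) (hr1 : r ^ 2 + 2 * |Δ| * r < 1) {N : ℕ}
    (σ : Equiv.Perm (Fin N)) (y a : Fin N → ℤ) : Continuous (fGl Δ r σ y a) := by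
  unfold fGl
  apply Continuous.mul
  apply Continuous.mul
  · unfold Acoef Smat
    apply continuous_finset_prod
    intro p _
    have hc1 : Continuous fun ξ : Fin N → ℂ => clampC r (ξ p.1) :=
      (continuous_clampC hr).comp (continuous_apply p.1)
    have hc2 : Continuous fun ξ : Fin N → ℂ => clampC r (ξ p.2) :=
      (continuous_clampC hr).comp (continuous_apply p.2)
    apply Continuous.div
    · exact ((continuous_const.add (hc1.mul hc2)).sub (continuous_const.mul hc2)).neg
    · exact (continuous_const.add (hc1.mul hc2)).sub (continuous_const.mul hc1)
    · intro ξ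
      exact denom_ne_zero hr hr1 (norm_clampC_le hr (ξ p.1)) (norm_clampC_le hr (ξ p.2))
  · exact continuous_finset_prod _ fun i _ =>
      (continuous_zpS hr (a i)).comp (continuous_apply (σ i))
  · exact continuous_finset_prod _ fun i _ =>
      (continuous_zpS hr (-y i - 1)).comp (continuous_apply i)

lemma continuous_gGl {Δ r : ℝ} (hr : 0 < r) {N : ℕ} :
    Continuous (gGl Δ r (N := N)) :=
  continuous_const.mul (continuous_finset_sum _ fun i _ =>
    (continuous_epsS hr Δ).comp (continuous_apply i))

lemma fGl_eq {Δ r : ℝ} (hr : 0 < r) {N : ℕ} (σ : Equiv.Perm (Fin N)) (y b : Fin N → ℤ)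
    (ξ : Fin N → ℂ) (hξ : ∀ i, ‖ξ i‖ = r) :
    fGl Δ r σ y b ξ
      = Acoef (Δ : ℂ) σ ξ * (∏ i, ξ (σ i) ^ b i) * ∏ i, ξ i ^ (-y i - 1) := by
  unfold fGl
  congr 1
  · congr 1
    · unfold Acoef
      refine Finset.prod_congr rfl fun p _ => ?_
      show Smat (Δ : ℂ) (clampC r (ξ p.2)) (clampC r (ξ p.1)) = Smat (Δ : ℂ) (ξ p.2) (ξ p.1)
      rw [clampC_eq hr (hξ _), clampC_eq hr (hξ _)]
    · exact Finset.prod_congr rfl fun i _ => zpS_eq hr _ (hξ _)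
  · exact Finset.prod_congr rfl fun i _ => zpS_eq hr _ (hξ _)

lemma integrand_eq {Δ r : ℝ} (hr : 0 < r) {N : ℕ} (σ : Equiv.Perm (Fin N))
    (y a : Fin N → ℤ) (t : ℝ) (ξ : Fin N → ℂ) (hξ : ∀ i, ‖ξ i‖ = r) :
    fGl Δ r σ y a ξ * Complex.exp ((t : ℂ) * gGl Δ r ξ)
      = Acoef (Δ : ℂ) σ ξ * (∏ i, ξ (σ i) ^ a i) *
        ∏ i, ξ i ^ (-y i - 1) * Complex.exp (-Complex.I * (t : ℂ) * eps Δ (ξ i)) := by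
  have h4 : Complex.exp ((t : ℂ) * gGl Δ r ξ)
      = ∏ i, Complex.exp (-Complex.I * (t : ℂ) * eps Δ (ξ i)) := by
    rw [← Complex.exp_sum]
    congr 1
    unfold gGl
    rw [Finset.mul_sum, Finset.mul_sum]
    refine Finset.sum_congr rfl fun i _ => ?_
    rw [epsS_eq hr Δ (hξ i)]
    ring
  rw [fGl_eq hr σ y a ξ hξ, h4, Finset.prod_mul_distrib]
  ring

lemma psi_eq {Δ r : ℝ} (hr : 0 < r) {N : ℕ} (y b : Fin N → ℤ) (t : ℝ) :
    psi Δ N r y b t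
      = ∑ σ : Equiv.Perm (Fin N), iterInt N (fun _ => cInt 0 r)
          (fun ξ => fGl Δ r σ y b ξ * Complex.exp ((t : ℂ) * gGl Δ r ξ)) := by
  unfold psi
  refine Finset.sum_congr rfl fun σ _ => ?_
  exact iterInt_congr hr.le N _ _ fun ξ hξ => (integrand_eq hr σ y b t ξ hξ).symm

lemma pointwise_identity {Δ r : ℝ} (hr : 0 < r) {N : ℕ} (σ : Equiv.Perm (Fin N))
    (y x : Fin N → ℤ) (ξ : Fin N → ℂ) (hξ : ∀ i, ‖ξ i‖ = r) (E : ℂ) :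
    Complex.I * (fGl Δ r σ y x ξ * (gGl Δ r ξ * E)) =
      (∑ j : Fin N, (fGl Δ r σ y (Function.update x j (x j - 1)) ξ * E
        + fGl Δ r σ y (Function.update x j (x j + 1)) ξ * E))
      - 2 * (N : ℂ) * (Δ : ℂ) * (fGl Δ r σ y x ξ * E) := by
  classical
  have hz : ∀ i, ξ i ≠ 0 := by
    intro i h
    have := hξ i
    rw [h, norm_zero] at this
    exact hr.ne this
  have hI : Complex.I * gGl Δ r ξ = ∑ i, eps Δ (ξ i) := by
    unfold gGl
    rw [← mul_assoc, show Complex.I * -Complex.I = 1 by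
      rw [mul_neg, Complex.I_mul_I]; ring, one_mul]
    exact Finset.sum_congr rfl fun i _ => epsS_eq hr Δ (hξ i)
  have hupd : ∀ (j : Fin N) (c : ℤ),
      (∏ i, ξ (σ i) ^ Function.update x j (x j + c) i)
        = (∏ i, ξ (σ i) ^ x i) * ξ (σ j) ^ c := by
    intro j c
    rw [← Finset.mul_prod_erase Finset.univ _ (Finset.mem_univ j),
      ← Finset.mul_prod_erase Finset.univ (fun i => ξ (σ i) ^ x i) (Finset.mem_univ j)]
    rw [Function.update_self]
    have herase : (∏ i ∈ Finset.univ.erase j, ξ (σ i) ^ Function.update x j (x j + c) i)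
        = ∏ i ∈ Finset.univ.erase j, ξ (σ i) ^ x i :=
      Finset.prod_congr rfl fun i hi => by
        rw [Function.update_of_ne (Finset.ne_of_mem_erase hi)]
    rw [herase, zpow_add₀ (hz (σ j))]
    ring
  have hm : ∀ j : Fin N, Function.update x j (x j - 1) = Function.update x j (x j + (-1)) := by
    intro j; rw [sub_eq_add_neg]
  calc Complex.I * (fGl Δ r σ y x ξ * (gGl Δ r ξ * E))
      = (fGl Δ r σ y x ξ * E) * (Complex.I * gGl Δ r ξ) := by ring
    _ = (fGl Δ r σ y x ξ * E) * ∑ i, eps Δ (ξ i) := by rw [hI]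
    _ = (∑ j : Fin N, ((fGl Δ r σ y x ξ * E) * eps Δ (ξ (σ j))
          + (fGl Δ r σ y x ξ * E) * (2 * (Δ : ℂ))))
        - 2 * (N : ℂ) * (Δ : ℂ) * (fGl Δ r σ y x ξ * E) := by
        rw [Finset.sum_add_distrib, ← Finset.mul_sum,
          Equiv.sum_comp σ (fun i => eps Δ (ξ i)), Finset.sum_const, Finset.card_univ,
          Fintype.card_fin, nsmul_eq_mul]
        ring
    _ = (∑ j : Fin N, (fGl Δ r σ y (Function.update x j (x j - 1)) ξ * E
          + fGl Δ r σ y (Function.update x j (x j + 1)) ξ * E))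
        - 2 * (N : ℂ) * (Δ : ℂ) * (fGl Δ r σ y x ξ * E) := by
        congr 1
        refine Finset.sum_congr rfl fun j _ => ?_
        rw [hm j]
        rw [fGl_eq hr σ y x ξ hξ, fGl_eq hr σ y _ ξ hξ, fGl_eq hr σ y _ ξ hξ]
        rw [show (x j + (1:ℤ)) = x j + 1 from rfl]
        rw [hupd j (-1), hupd j 1, zpow_neg_one, zpow_one]
        unfold eps
        ring

theorem stmt1 (Δ : ℝ) (N : ℕ) (hN : 0 < N) (y : Fin N → ℤ) (hy : StrictMono y)
    (r : ℝ) (hr : 0 < r) (hr1 : r ^ 2 + 2 * |Δ| * r < 1) :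
    ∀ (x : Fin N → ℤ) (t : ℝ), ∃ d : ℂ,
      HasDerivAt (fun s : ℝ => psi Δ N r y x s) d t ∧
      Complex.I * d =
        (∑ j : Fin N,
          (psi Δ N r y (Function.update x j (x j - 1)) t +
            psi Δ N r y (Function.update x j (x j + 1)) t))
          - 2 * (N : ℂ) * (Δ : ℂ) * psi Δ N r y x t := by
  intro x t
  have hgc : Continuous (gGl Δ r (N := N)) := continuous_gGl hr
  have hfc : ∀ (σ : Equiv.Perm (Fin N)) (b : Fin N → ℤ), Continuous (fGl Δ r σ y b) :=
    fun σ b => continuous_fGl hr hr1 σ y b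
  have hE : Continuous fun ξ : Fin N → ℂ => Complex.exp ((t : ℂ) * gGl Δ r ξ) :=
    Complex.continuous_exp.comp (continuous_const.mul hgc)
  refine ⟨∑ σ : Equiv.Perm (Fin N), iterInt N (fun _ => cInt 0 r)
      (fun ξ => fGl Δ r σ y x ξ * (gGl Δ r ξ * Complex.exp ((t : ℂ) * gGl Δ r ξ))), ?_, ?_⟩
  · have hfun : (fun s : ℝ => psi Δ N r y x s) = fun s : ℝ =>
        ∑ σ : Equiv.Perm (Fin N), iterInt N (fun _ => cInt 0 r)
          (fun ξ => fGl Δ r σ y x ξ * Complex.exp ((s : ℂ) * gGl Δ r ξ)) :=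
      funext fun s => psi_eq hr y x s
    rw [hfun]
    exact HasDerivAt.fun_sum fun σ _ => iterInt_hasDerivAt hr N _ _ (hfc σ x) hgc t
  · have perσ : ∀ σ : Equiv.Perm (Fin N),
        Complex.I * iterInt N (fun _ => cInt 0 r)
            (fun ξ => fGl Δ r σ y x ξ * (gGl Δ r ξ * Complex.exp ((t : ℂ) * gGl Δ r ξ)))
        = (∑ j : Fin N, (iterInt N (fun _ => cInt 0 r)
              (fun ξ => fGl Δ r σ y (Function.update x j (x j - 1)) ξ
                * Complex.exp ((t : ℂ) * gGl Δ r ξ))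
            + iterInt N (fun _ => cInt 0 r)
              (fun ξ => fGl Δ r σ y (Function.update x j (x j + 1)) ξ
                * Complex.exp ((t : ℂ) * gGl Δ r ξ))))
          - 2 * (N : ℂ) * (Δ : ℂ) * iterInt N (fun _ => cInt 0 r)
              (fun ξ => fGl Δ r σ y x ξ * Complex.exp ((t : ℂ) * gGl Δ r ξ)) := by
      intro σ
      have hcont1 : ∀ b : Fin N → ℤ, Continuous fun ξ : Fin N → ℂ =>
          fGl Δ r σ y b ξ * Complex.exp ((t : ℂ) * gGl Δ r ξ) :=
        fun b => (hfc σ b).mul hE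
      have hstep1 : ∀ j : Fin N,
          iterInt N (fun _ => cInt 0 r)
              (fun ξ => fGl Δ r σ y (Function.update x j (x j - 1)) ξ
                * Complex.exp ((t : ℂ) * gGl Δ r ξ))
            + iterInt N (fun _ => cInt 0 r)
              (fun ξ => fGl Δ r σ y (Function.update x j (x j + 1)) ξ
                * Complex.exp ((t : ℂ) * gGl Δ r ξ))
          = iterInt N (fun _ => cInt 0 r)
              (fun ξ => fGl Δ r σ y (Function.update x j (x j - 1)) ξ
                  * Complex.exp ((t : ℂ) * gGl Δ r ξ)
                + fGl Δ r σ y (Function.update x j (x j + 1)) ξ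
                  * Complex.exp ((t : ℂ) * gGl Δ r ξ)) :=
        fun j => (iterInt_add hr N _ _ (hcont1 _) (hcont1 _)).symm
      calc Complex.I * iterInt N (fun _ => cInt 0 r)
            (fun ξ => fGl Δ r σ y x ξ * (gGl Δ r ξ * Complex.exp ((t : ℂ) * gGl Δ r ξ)))
          = iterInt N (fun _ => cInt 0 r) (fun ξ => Complex.I *
              (fGl Δ r σ y x ξ * (gGl Δ r ξ * Complex.exp ((t : ℂ) * gGl Δ r ξ)))) :=
            (iterInt_const_mul Complex.I N _).symm
        _ = iterInt N (fun _ => cInt 0 r) (fun ξ =>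
              (∑ j : Fin N, (fGl Δ r σ y (Function.update x j (x j - 1)) ξ
                  * Complex.exp ((t : ℂ) * gGl Δ r ξ)
                + fGl Δ r σ y (Function.update x j (x j + 1)) ξ
                  * Complex.exp ((t : ℂ) * gGl Δ r ξ)))
              - 2 * (N : ℂ) * (Δ : ℂ) * (fGl Δ r σ y x ξ
                  * Complex.exp ((t : ℂ) * gGl Δ r ξ))) :=
            iterInt_congr hr.le N _ _ fun ξ hξ => pointwise_identity hr σ y x ξ hξ _
        _ = iterInt N (fun _ => cInt 0 r) (fun ξ =>
              (∑ j : Fin N, (fGl Δ r σ y (Function.update x j (x j - 1)) ξ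
                  * Complex.exp ((t : ℂ) * gGl Δ r ξ)
                + fGl Δ r σ y (Function.update x j (x j + 1)) ξ
                  * Complex.exp ((t : ℂ) * gGl Δ r ξ))))
            - iterInt N (fun _ => cInt 0 r) (fun ξ =>
              2 * (N : ℂ) * (Δ : ℂ) * (fGl Δ r σ y x ξ
                  * Complex.exp ((t : ℂ) * gGl Δ r ξ))) :=
            iterInt_sub hr N _ _
              (continuous_finset_sum _ fun j _ => (hcont1 _).add (hcont1 _))
              (continuous_const.mul (hcont1 _))
        _ = (∑ j : Fin N, (iterInt N (fun _ => cInt 0 r)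
              (fun ξ => fGl Δ r σ y (Function.update x j (x j - 1)) ξ
                  * Complex.exp ((t : ℂ) * gGl Δ r ξ)
                + fGl Δ r σ y (Function.update x j (x j + 1)) ξ
                  * Complex.exp ((t : ℂ) * gGl Δ r ξ))))
            - 2 * (N : ℂ) * (Δ : ℂ) * iterInt N (fun _ => cInt 0 r)
              (fun ξ => fGl Δ r σ y x ξ * Complex.exp ((t : ℂ) * gGl Δ r ξ)) := by
            rw [iterInt_sum hr N Finset.univ (fun j ξ => fGl Δ r σ y (Function.update x j (x j - 1)) ξ
                    * Complex.exp ((t : ℂ) * gGl Δ r ξ)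
                  + fGl Δ r σ y (Function.update x j (x j + 1)) ξ
                    * Complex.exp ((t : ℂ) * gGl Δ r ξ))
              (fun j _ => (hcont1 _).add (hcont1 _)),
              iterInt_const_mul]
        _ = _ := by
            congr 1
            exact Finset.sum_congr rfl fun j _ => (hstep1 j).symm
    have hpsi : ∀ (b : Fin N → ℤ), psi Δ N r y b t
        = ∑ σ : Equiv.Perm (Fin N), iterInt N (fun _ => cInt 0 r)
            (fun ξ => fGl Δ r σ y b ξ * Complex.exp ((t : ℂ) * gGl Δ r ξ)) :=
      fun b => psi_eq hr y b t
    simp only [hpsi]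
    rw [Finset.mul_sum]
    calc ∑ σ : Equiv.Perm (Fin N), Complex.I * iterInt N (fun _ => cInt 0 r)
            (fun ξ => fGl Δ r σ y x ξ * (gGl Δ r ξ * Complex.exp ((t : ℂ) * gGl Δ r ξ)))
        = ∑ σ : Equiv.Perm (Fin N),
            ((∑ j : Fin N, (iterInt N (fun _ => cInt 0 r)
              (fun ξ => fGl Δ r σ y (Function.update x j (x j - 1)) ξ
                * Complex.exp ((t : ℂ) * gGl Δ r ξ))
            + iterInt N (fun _ => cInt 0 r)
              (fun ξ => fGl Δ r σ y (Function.update x j (x j + 1)) ξ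
                * Complex.exp ((t : ℂ) * gGl Δ r ξ))))
          - 2 * (N : ℂ) * (Δ : ℂ) * iterInt N (fun _ => cInt 0 r)
              (fun ξ => fGl Δ r σ y x ξ * Complex.exp ((t : ℂ) * gGl Δ r ξ))) :=
          Finset.sum_congr rfl fun σ _ => perσ σ
      _ = (∑ σ : Equiv.Perm (Fin N), ∑ j : Fin N, (iterInt N (fun _ => cInt 0 r)
              (fun ξ => fGl Δ r σ y (Function.update x j (x j - 1)) ξ
                * Complex.exp ((t : ℂ) * gGl Δ r ξ))
            + iterInt N (fun _ => cInt 0 r)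
              (fun ξ => fGl Δ r σ y (Function.update x j (x j + 1)) ξ
                * Complex.exp ((t : ℂ) * gGl Δ r ξ))))
          - ∑ σ : Equiv.Perm (Fin N), 2 * (N : ℂ) * (Δ : ℂ) * iterInt N (fun _ => cInt 0 r)
              (fun ξ => fGl Δ r σ y x ξ * Complex.exp ((t : ℂ) * gGl Δ r ξ)) :=
          Finset.sum_sub_distrib _ _
      _ = (∑ j : Fin N, (∑ σ : Equiv.Perm (Fin N), iterInt N (fun _ => cInt 0 r)
              (fun ξ => fGl Δ r σ y (Function.update x j (x j - 1)) ξ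
                * Complex.exp ((t : ℂ) * gGl Δ r ξ))
            + ∑ σ : Equiv.Perm (Fin N), iterInt N (fun _ => cInt 0 r)
              (fun ξ => fGl Δ r σ y (Function.update x j (x j + 1)) ξ
                * Complex.exp ((t : ℂ) * gGl Δ r ξ))))
          - 2 * (N : ℂ) * (Δ : ℂ) * ∑ σ : Equiv.Perm (Fin N), iterInt N (fun _ => cInt 0 r)
              (fun ξ => fGl Δ r σ y x ξ * Complex.exp ((t : ℂ) * gGl Δ r ξ)) := by
          rw [Finset.sum_comm, ← Finset.mul_sum]
          congr 1
          exact Finset.sum_congr rfl fun j _ => Finset.sum_add_distrib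
end

section
/- Let Δ ∈ ℝ, N ≥ 1, let y_1 < ⋯ < y_N be integers, and let R > 0 satisfy R² - 2|Δ|R - 1 > 0. Then Σ_{σ ∈ S_N} sgn(σ) · (2πi)^{-N} ∮_{C_R}⋯∮_{C_R} [ ∏_{j<k with σ(j)>σ(k)} (1 + ξ_{σ(k)}ξ_{σ(j)} - 2Δξ_{σ(j)}) / (1 + ξ_{σ(k)}ξ_{σ(j)} - 2Δξ_{σ(k)}) ] · ∏_{j=1}^N ξ_{σ(j)}^{y_j - y_{σ(j)} - 1} dξ_1⋯dξ_N = 1. (In the notation of Section 8 this is the identity Σ_{σ∈S_N} (-1)^σ F(σ, ∅) = 1.) -/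
open scoped Real BigOperators

namespace Stmt6

open Complex Metric Finset Filter

/-- The complex absolute value, as an absolute value. -/
noncomputable def Complex.abs : AbsoluteValue ℂ ℝ := NormedField.toAbsoluteValue ℂ

@[simp] lemma Complex.abs_apply (z : ℂ) : Complex.abs z = ‖z‖ := rfl

lemma Complex.abs_ofReal (x : ℝ) : Complex.abs (x : ℂ) = |x| := by simp

lemma abs_circleMap_zero (ρ θ : ℝ) : Complex.abs (circleMap 0 ρ θ) = |ρ| := by
  simp [norm_circleMap_zero]

/-- The integrand of the theorem. -/
noncomputable def F (Δ : ℝ) {N : ℕ} (y : Fin N → ℤ) (σ : Equiv.Perm (Fin N))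
    (ξ : Fin N → ℂ) : ℂ :=
  (∏ p ∈ Finset.univ.filter
      (fun p : Fin N × Fin N => p.1 < p.2 ∧ σ p.2 < σ p.1),
    (1 + ξ (σ p.2) * ξ (σ p.1) - 2 * (Δ : ℂ) * ξ (σ p.1)) /
      (1 + ξ (σ p.2) * ξ (σ p.1) - 2 * (Δ : ℂ) * ξ (σ p.2))) *
  ∏ j, ξ (σ j) ^ (y j - y (σ j) - 1)

lemma cInt_const_mul (c : ℂ) (ρ : ℝ) (a : ℂ) (f : ℂ → ℂ) :
    cInt c ρ (fun z => a * f z) = a * cInt c ρ f := by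
  have h := circleIntegral.integral_smul (E := ℂ) (𝕜 := ℂ) a f c ρ
  simp only [smul_eq_mul] at h
  simp only [cInt, h]; ring

lemma cInt_mul_const (c : ℂ) (ρ : ℝ) (a : ℂ) (f : ℂ → ℂ) :
    cInt c ρ (fun z => f z * a) = cInt c ρ f * a := by
  simp only [fun z => mul_comm (f z) a, cInt_const_mul]
  ring

lemma cInt_zero_on {ρ : ℝ} (hρ : 0 ≤ ρ) (f : ℂ → ℂ)
    (hf : ∀ z : ℂ, Complex.abs z = ρ → f z = 0) : cInt 0 ρ f = 0 := by
  have : (∮ z in C((0 : ℂ), ρ), f z) = 0 := by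
    have : ∀ θ : ℝ, f (circleMap 0 ρ θ) = 0 := fun θ => by
      apply hf; rw [abs_circleMap_zero, _root_.abs_of_nonneg hρ]
    simp [circleIntegral, this]
  simp [cInt, this]

lemma cInt_inv {R : ℝ} (hR : 0 < R) : cInt 0 R (fun z => z ^ (-1 : ℤ)) = 1 := by
  have h0 : (0 : ℂ) ∈ ball (0 : ℂ) R := by simpa using hR
  have h := circleIntegral.integral_sub_inv_of_mem_ball h0
  simp only [sub_zero] at h
  have : (fun z : ℂ => z ^ (-1 : ℤ)) = fun z : ℂ => z⁻¹ := by
    funext z; simp [zpow_neg_one]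
  rw [cInt, this, h, inv_mul_cancel₀ Complex.two_pi_I_ne_zero]

lemma cons_eq_snoc (z : ℂ) :
    Fin.cons z (Fin.elim0 : Fin 0 → ℂ) = Fin.snoc (α := fun _ : Fin 1 => ℂ) Fin.elim0 z := by
  funext i
  have : i = Fin.last 0 := by omega
  subst this
  rw [Fin.snoc_last]
  simp

lemma iterInt_factor (R : ℝ) :
    ∀ (n : ℕ) (f : (Fin (n + 1) → ℂ) → ℂ) (g : (Fin n → ℂ) → ℂ) (h : ℂ → ℂ),
      (∀ (w : Fin n → ℂ) (t : ℂ), f (Fin.snoc w t) = g w * h t) →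
      iterInt (n + 1) (fun _ => cInt 0 R) f
        = iterInt n (fun _ => cInt 0 R) g * cInt 0 R h := by
  intro n
  induction n with
  | zero =>
    intro f g h hf
    show cInt 0 R (fun z => f (Fin.cons z Fin.elim0)) = _
    have : (fun z => f (Fin.cons z Fin.elim0)) = fun z => g Fin.elim0 * h z := by
      funext z; rw [cons_eq_snoc, hf]
    rw [this, cInt_const_mul]
    rfl
  | succ n ih =>
    intro f g h hf
    show cInt 0 R (fun z => iterInt (n + 1) (fun _ => cInt 0 R)
        (fun w => f (Fin.cons z w))) = _
    have : (fun z => iterInt (n + 1) (fun _ => cInt 0 R) (fun w => f (Fin.cons z w)))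
        = fun z => iterInt n (fun _ => cInt 0 R) (fun w => g (Fin.cons z w)) * cInt 0 R h := by
      funext z
      apply ih
      intro w t
      rw [Fin.cons_snoc_eq_snoc_cons, hf]
    rw [this, cInt_mul_const]
    rfl

lemma iterInt_zero_of {R : ℝ} (hR : 0 < R) :
    ∀ (n : ℕ) (f : (Fin (n + 1) → ℂ) → ℂ),
      (∀ w : Fin n → ℂ, (∀ i, Complex.abs (w i) = R) →
        cInt 0 R (fun t => f (Fin.snoc w t)) = 0) →
      iterInt (n + 1) (fun _ => cInt 0 R) f = 0 := by
  intro n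
  induction n with
  | zero =>
    intro f hf
    show cInt 0 R (fun z => f (Fin.cons z Fin.elim0)) = 0
    have : (fun z => f (Fin.cons z Fin.elim0)) = fun z => f (Fin.snoc Fin.elim0 z) := by
      funext z; rw [cons_eq_snoc]
    rw [this]
    exact hf Fin.elim0 (fun i => Fin.elim0 i)
  | succ n ih =>
    intro f hf
    show cInt 0 R (fun z => iterInt (n + 1) (fun _ => cInt 0 R)
        (fun w => f (Fin.cons z w))) = 0
    apply cInt_zero_on hR.le
    intro z hz
    apply ih
    intro w hw
    have : (fun t => f (Fin.cons z (Fin.snoc w t)))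
        = fun t => f (Fin.snoc (Fin.cons z w) t) := by
      funext t; rw [Fin.cons_snoc_eq_snoc_cons]
    rw [this]
    apply hf
    intro i
    refine Fin.cases ?_ ?_ i
    · simpa using hz
    · intro j; simpa using hw j

/-- Vanishing of a contour integral of a function analytic outside the contour
decaying like `|t|⁻²`. -/
lemma cInt_zero_of_decay {R : ℝ} (hR : 0 < R) (g : ℂ → ℂ)
    (hd : ∀ t : ℂ, R ≤ Complex.abs t → DifferentiableAt ℂ g t)
    (K : ℝ) (hb : ∀ t : ℂ, R ≤ Complex.abs t → Complex.abs (g t) ≤ K / Complex.abs t ^ 2) :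
    cInt 0 R g = 0 := by
  suffices h : (∮ z in C((0 : ℂ), R), g z) = 0 by simp [cInt, h]
  have habs : ∀ z : ℂ, dist z 0 = Complex.abs z := fun z => by
    simp [Complex.dist_eq]
  have key : ∀ r : ℝ, R ≤ r →
      ‖∮ z in C((0 : ℂ), R), g z‖ ≤ 2 * Real.pi * r * (K / r ^ 2) := by
    intro r hr
    have heq : (∮ z in C((0 : ℂ), r), g z) = ∮ z in C((0 : ℂ), R), g z := by
      apply circleIntegral_eq_of_differentiable_on_annulus_off_countable hR hr
        Set.countable_empty
      · intro z hz
        have hz' : R ≤ Complex.abs z := by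
          have := hz.2
          rw [mem_ball, habs] at this
          linarith [not_lt.mp this]
        exact (hd z hz').continuousAt.continuousWithinAt
      · intro z hz
        have hz' : R ≤ Complex.abs z := by
          have := hz.1.2
          rw [mem_closedBall, habs] at this
          linarith [not_le.mp this]
        exact hd z hz'
    rw [← heq]
    apply circleIntegral.norm_integral_le_of_norm_le_const (le_trans hR.le hr)
    intro z hz
    have hzr : Complex.abs z = r := by
      rw [mem_sphere, habs] at hz; exact hz
    have := hb z (by rw [hzr]; exact hr)
    rw [hzr] at this
    simpa using this
  have hlim : Tendsto (fun r : ℝ => 2 * Real.pi * r * (K / r ^ 2)) atTop (nhds 0) := by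
    have hcong : (fun r : ℝ => 2 * Real.pi * r * (K / r ^ 2))
        =ᶠ[atTop] fun r : ℝ => (2 * Real.pi * K) / r := by
      filter_upwards [eventually_gt_atTop (0 : ℝ)] with r hr
      field_simp
    rw [tendsto_congr' hcong]
    exact Tendsto.div_atTop tendsto_const_nhds tendsto_id
  have : ‖∮ z in C((0 : ℂ), R), g z‖ ≤ 0 :=
    ge_of_tendsto hlim (eventually_atTop.2 ⟨R, key⟩)
  exact norm_le_zero_iff.mp this

lemma abs_den_lb {Δ R : ℝ} (hR : 0 < R) (hR1 : 0 < R ^ 2 - 2 * |Δ| * R - 1)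
    {u v : ℂ} (hu : R ≤ Complex.abs u) (hv : R ≤ Complex.abs v) :
    (R ^ 2 - 2 * |Δ| * R - 1) / R ^ 2 * (Complex.abs u * Complex.abs v)
      ≤ Complex.abs (1 + u * v - 2 * (Δ : ℂ) * u) := by
  have hau : (0 : ℝ) < Complex.abs u := lt_of_lt_of_le hR hu
  have hav : (0 : ℝ) < Complex.abs v := lt_of_lt_of_le hR hv
  have htri : Complex.abs (u * v) - Complex.abs (2 * (Δ : ℂ) * u - 1)
      ≤ Complex.abs (1 + u * v - 2 * (Δ : ℂ) * u) := by
    have h := Complex.abs.add_le (1 + u * v - 2 * (Δ : ℂ) * u) (2 * (Δ : ℂ) * u - 1)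
    have he : 1 + u * v - 2 * (Δ : ℂ) * u + (2 * (Δ : ℂ) * u - 1) = u * v := by ring
    rw [he] at h
    linarith
  have hb : Complex.abs (2 * (Δ : ℂ) * u - 1) ≤ 2 * |Δ| * Complex.abs u + 1 := by
    calc Complex.abs (2 * (Δ : ℂ) * u - 1)
        ≤ Complex.abs (2 * (Δ : ℂ) * u) + Complex.abs 1 := Complex.abs.sub_le_add _ _
      _ = 2 * |Δ| * Complex.abs u + 1 := by
          simp [map_mul, Complex.abs_ofReal]
  rw [map_mul] at htri
  have key : Complex.abs u * Complex.abs v - (2 * |Δ| * Complex.abs u + 1)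
      ≤ Complex.abs (1 + u * v - 2 * (Δ : ℂ) * u) := by linarith
  have h2 : 2 * |Δ| * R * (Complex.abs u * Complex.abs v)
      ≥ 2 * |Δ| * R * (R * Complex.abs u) := by
    have : R * Complex.abs u ≤ Complex.abs u * Complex.abs v := by
      rw [mul_comm]
      exact mul_le_mul_of_nonneg_left hv hau.le
    exact mul_le_mul_of_nonneg_left this (by positivity)
  have h3 : R * R ≤ Complex.abs u * Complex.abs v :=
    mul_le_mul hu hv hR.le hau.le
  rw [div_mul_eq_mul_div, div_le_iff₀ (by positivity : (0:ℝ) < R ^ 2)]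
  nlinarith [abs_nonneg Δ, hR.le]

lemma abs_num_ub {Δ R : ℝ} (hR : 0 < R) {u v : ℂ}
    (hu : R ≤ Complex.abs u) (hv : R ≤ Complex.abs v) :
    Complex.abs (1 + u * v - 2 * (Δ : ℂ) * v)
      ≤ (R ^ 2 + 2 * |Δ| * R + 1) / R ^ 2 * (Complex.abs u * Complex.abs v) := by
  have hau : (0 : ℝ) < Complex.abs u := lt_of_lt_of_le hR hu
  have hav : (0 : ℝ) < Complex.abs v := lt_of_lt_of_le hR hv
  have htri : Complex.abs (1 + u * v - 2 * (Δ : ℂ) * v)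
      ≤ 1 + Complex.abs u * Complex.abs v + 2 * |Δ| * Complex.abs v := by
    calc Complex.abs (1 + u * v - 2 * (Δ : ℂ) * v)
        ≤ Complex.abs (1 + u * v) + Complex.abs (2 * (Δ : ℂ) * v) :=
          Complex.abs.sub_le_add _ _
      _ ≤ Complex.abs 1 + Complex.abs (u * v) + Complex.abs (2 * (Δ : ℂ) * v) := by
          have := Complex.abs.add_le 1 (u * v); linarith
      _ = 1 + Complex.abs u * Complex.abs v + 2 * |Δ| * Complex.abs v := by
          simp [map_mul, Complex.abs_ofReal]
  rw [div_mul_eq_mul_div, le_div_iff₀ (by positivity : (0:ℝ) < R ^ 2)]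
  have h2 : 2 * |Δ| * R * (R * Complex.abs v) ≤ 2 * |Δ| * R * (Complex.abs u * Complex.abs v) := by
    have : R * Complex.abs v ≤ Complex.abs u * Complex.abs v :=
      mul_le_mul_of_nonneg_right hu hav.le
    exact mul_le_mul_of_nonneg_left this (by positivity)
  have h3 : R * R ≤ Complex.abs u * Complex.abs v :=
    mul_le_mul hu hv hR.le hau.le
  nlinarith [abs_nonneg Δ, hR.le]

lemma den_pos {Δ R : ℝ} (hR : 0 < R) (hR1 : 0 < R ^ 2 - 2 * |Δ| * R - 1)
    {u v : ℂ} (hu : R ≤ Complex.abs u) (hv : R ≤ Complex.abs v) :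
    0 < Complex.abs (1 + u * v - 2 * (Δ : ℂ) * u) := by
  have hau : (0 : ℝ) < Complex.abs u := lt_of_lt_of_le hR hu
  have hav : (0 : ℝ) < Complex.abs v := lt_of_lt_of_le hR hv
  have := abs_den_lb hR hR1 hu hv
  have hpos : 0 < (R ^ 2 - 2 * |Δ| * R - 1) / R ^ 2 * (Complex.abs u * Complex.abs v) := by
    positivity
  linarith

lemma den_ne {Δ R : ℝ} (hR : 0 < R) (hR1 : 0 < R ^ 2 - 2 * |Δ| * R - 1)
    {u v : ℂ} (hu : R ≤ Complex.abs u) (hv : R ≤ Complex.abs v) :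
    (1 + u * v - 2 * (Δ : ℂ) * u) ≠ 0 := by
  have := den_pos hR hR1 hu hv
  intro h
  rw [h] at this
  simp at this

lemma ratio_le {Δ R : ℝ} (hR : 0 < R) (hR1 : 0 < R ^ 2 - 2 * |Δ| * R - 1)
    {u v : ℂ} (hu : R ≤ Complex.abs u) (hv : R ≤ Complex.abs v) :
    Complex.abs ((1 + u * v - 2 * (Δ : ℂ) * v) / (1 + u * v - 2 * (Δ : ℂ) * u))
      ≤ ((R ^ 2 + 2 * |Δ| * R + 1) / R ^ 2) / ((R ^ 2 - 2 * |Δ| * R - 1) / R ^ 2) := by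
  have hau : (0 : ℝ) < Complex.abs u := lt_of_lt_of_le hR hu
  have hav : (0 : ℝ) < Complex.abs v := lt_of_lt_of_le hR hv
  have hub := abs_num_ub (Δ := Δ) hR hu hv
  have hlb := abs_den_lb (Δ := Δ) hR hR1 hu hv
  have hdpos : 0 < (R ^ 2 - 2 * |Δ| * R - 1) / R ^ 2 * (Complex.abs u * Complex.abs v) := by
    positivity
  rw [map_div₀]
  calc Complex.abs (1 + u * v - 2 * (Δ : ℂ) * v) / Complex.abs (1 + u * v - 2 * (Δ : ℂ) * u)
      ≤ ((R ^ 2 + 2 * |Δ| * R + 1) / R ^ 2 * (Complex.abs u * Complex.abs v))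
        / ((R ^ 2 - 2 * |Δ| * R - 1) / R ^ 2 * (Complex.abs u * Complex.abs v)) := by
        apply div_le_div₀ (by positivity) hub hdpos hlb
    _ = ((R ^ 2 + 2 * |Δ| * R + 1) / R ^ 2) / ((R ^ 2 - 2 * |Δ| * R - 1) / R ^ 2) := by
        rw [mul_div_mul_right _ _ (by positivity : Complex.abs u * Complex.abs v ≠ 0)]

lemma zpow_decay {R s : ℝ} (hR : 0 < R) (hs : R ≤ s) {e : ℤ} (he : e ≤ -2) :
    s ^ e ≤ R ^ (e + 2) / s ^ 2 := by
  have hs0 : (0 : ℝ) < s := lt_of_lt_of_le hR hs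
  have h1 : s ^ e = s ^ (e + 2) / s ^ 2 := by
    rw [eq_div_iff (by positivity : (s : ℝ) ^ 2 ≠ 0), ← zpow_natCast s 2,
      ← zpow_add₀ (ne_of_gt hs0)]
    norm_num
  rw [h1]
  have h2 : s ^ (e + 2) ≤ R ^ (e + 2) := by
    obtain ⟨k, hk⟩ : ∃ k : ℕ, e + 2 = -(k : ℤ) := ⟨(-(e + 2)).toNat, by omega⟩
    rw [hk, zpow_neg, zpow_neg, zpow_natCast, zpow_natCast]
    exact inv_anti₀ (pow_pos hR k) (pow_le_pow_left₀ hR.le hs k)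
  gcongr

lemma main {Δ R : ℝ} (hR : 0 < R) (hR1 : 0 < R ^ 2 - 2 * |Δ| * R - 1) :
    ∀ (N : ℕ) (y : Fin N → ℤ), StrictMono y → ∀ σ : Equiv.Perm (Fin N),
      iterInt N (fun _ => cInt 0 R) (F Δ y σ) = if σ = 1 then 1 else 0 := by
  intro N
  induction N with
  | zero =>
    intro y hy σ
    have hσ : σ = 1 := by ext i; exact i.elim0
    subst hσ
    show F Δ y 1 Fin.elim0 = _
    simp [F]
  | succ n ih =>
    intro y hy σ
    by_cases hfix : σ (Fin.last n) = Fin.last n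
    · -- `σ` fixes the last point: peel off the innermost integral.
      have h1 : ∀ i : Fin n, σ i.castSucc ≠ Fin.last n := by
        intro i h
        have := σ.injective (h.trans hfix.symm)
        exact (Fin.castSucc_lt_last i).ne this
      have h2 : ∀ i : Fin n, σ.symm i.castSucc ≠ Fin.last n := by
        intro i h
        have hh : i.castSucc = σ (Fin.last n) := by rw [← h, Equiv.apply_symm_apply]
        rw [hfix] at hh
        exact (Fin.castSucc_lt_last i).ne hh
      set σ' : Equiv.Perm (Fin n) :=
        { toFun := fun i => (σ i.castSucc).castPred (h1 i)
          invFun := fun i => (σ.symm i.castSucc).castPred (h2 i)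
          left_inv := by
            intro i
            simp [Fin.castSucc_castPred]
          right_inv := by
            intro i
            simp [Fin.castSucc_castPred] } with hσ'
      have hkey : ∀ i : Fin n, σ i.castSucc = (σ' i).castSucc := by
        intro i
        exact (Fin.castSucc_castPred _ (h1 i)).symm
      have hy' : StrictMono (y ∘ Fin.castSucc) := by
        intro a b hab
        exact hy (by simpa [Fin.castSucc_lt_castSucc_iff] using hab)
      have hfac : ∀ (w : Fin n → ℂ) (t : ℂ),
          F Δ y σ (Fin.snoc w t)
            = F Δ (y ∘ Fin.castSucc) σ' w * t ^ (-1 : ℤ) := by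
        intro w t
        unfold F
        set Ξ : Fin (n + 1) → ℂ := Fin.snoc w t with hΞ
        have hΞc : ∀ i : Fin n, Ξ i.castSucc = w i := by
          intro i; rw [hΞ, Fin.snoc_castSucc]
        have hΞl : Ξ (Fin.last n) = t := by rw [hΞ, Fin.snoc_last]
        have e2 : (∏ j, Ξ (σ j) ^ (y j - y (σ j) - 1))
            = (∏ j, w (σ' j) ^ ((y ∘ Fin.castSucc) j - (y ∘ Fin.castSucc) (σ' j) - 1))
              * t ^ (-1 : ℤ) := by
          rw [Fin.prod_univ_castSucc]
          congr 1
          · apply Finset.prod_congr rfl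
            intro i _
            rw [hkey i, hΞc]
            rfl
          · rw [hfix, hΞl]
            congr 1
            omega
        have e1 : (∏ p ∈ Finset.univ.filter
              (fun p : Fin (n+1) × Fin (n+1) => p.1 < p.2 ∧ σ p.2 < σ p.1),
            (1 + Ξ (σ p.2) * Ξ (σ p.1) - 2 * (Δ : ℂ) * Ξ (σ p.1)) /
              (1 + Ξ (σ p.2) * Ξ (σ p.1) - 2 * (Δ : ℂ) * Ξ (σ p.2)))
            = ∏ q ∈ Finset.univ.filter
              (fun q : Fin n × Fin n => q.1 < q.2 ∧ σ' q.2 < σ' q.1),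
            (1 + w (σ' q.2) * w (σ' q.1) - 2 * (Δ : ℂ) * w (σ' q.1)) /
              (1 + w (σ' q.2) * w (σ' q.1) - 2 * (Δ : ℂ) * w (σ' q.2)) := by
          have hmem : ∀ p : Fin (n+1) × Fin (n+1),
              p ∈ Finset.univ.filter
                (fun p : Fin (n+1) × Fin (n+1) => p.1 < p.2 ∧ σ p.2 < σ p.1) →
              p.1 ≠ Fin.last n ∧ p.2 ≠ Fin.last n := by
            intro p hp
            rw [Finset.mem_filter] at hp
            obtain ⟨-, hp1, hp2⟩ := hp
            constructor
            · exact (lt_of_lt_of_le hp1 (Fin.le_last _)).ne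
            · intro h
              rw [h, hfix] at hp2
              exact absurd hp2 (Fin.not_lt.mpr (Fin.le_last _))
          refine Finset.prod_bij'
            (fun p hp => (p.1.castPred (hmem p hp).1, p.2.castPred (hmem p hp).2))
            (fun q _ => (q.1.castSucc, q.2.castSucc)) ?_ ?_ ?_ ?_ ?_
          · intro p hp
            rw [Finset.mem_filter] at hp ⊢
            obtain ⟨-, hp1, hp2⟩ := hp
            refine ⟨Finset.mem_univ _, ?_, ?_⟩
            · rw [← Fin.castSucc_lt_castSucc_iff, Fin.castSucc_castPred,
                Fin.castSucc_castPred]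
              exact hp1
            · rw [← Fin.castSucc_lt_castSucc_iff, ← hkey, ← hkey,
                Fin.castSucc_castPred, Fin.castSucc_castPred]
              exact hp2
          · intro q hq
            rw [Finset.mem_filter] at hq ⊢
            obtain ⟨-, hq1, hq2⟩ := hq
            refine ⟨Finset.mem_univ _, ?_, ?_⟩
            · exact Fin.castSucc_lt_castSucc_iff.mpr hq1
            · rw [hkey, hkey]
              exact Fin.castSucc_lt_castSucc_iff.mpr hq2
          · intro p hp
            ext <;> simp [Fin.castSucc_castPred]
          · intro q hq
            ext <;> simp
          · intro p hp
            have h1' := (hmem p hp).1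
            have h2' := (hmem p hp).2
            have k1 : σ p.1 = (σ' (p.1.castPred h1')).castSucc := by
              rw [← hkey, Fin.castSucc_castPred]
            have k2 : σ p.2 = (σ' (p.2.castPred h2')).castSucc := by
              rw [← hkey, Fin.castSucc_castPred]
            rw [k1, k2, hΞc, hΞc]
        rw [e1, e2, ← mul_assoc]
      rw [iterInt_factor R n _ _ _ hfac, ih (y ∘ Fin.castSucc) hy' σ', cInt_inv hR,
        mul_one]
      have hiff : σ = 1 ↔ σ' = 1 := by
        constructor
        · intro h
          ext i
          have : σ i.castSucc = i.castSucc := by rw [h]; rfl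
          rw [hσ']
          simp only [Equiv.coe_fn_mk, this]
          simp
        · intro h
          ext i
          refine Fin.lastCases ?_ ?_ i
          · rw [hfix]; rfl
          · intro j
            have : σ' j = j := by rw [h]; rfl
            rw [hkey j, this]; rfl
      by_cases h : σ = 1
      · rw [if_pos h, if_pos (hiff.mp h)]
      · rw [if_neg h, if_neg (fun hh => h (hiff.mpr hh))]
    · -- `σ` moves the last point: the innermost integral vanishes.
      have hσ1 : σ ≠ 1 := fun h => hfix (by rw [h]; rfl)
      rw [if_neg hσ1]
      apply iterInt_zero_of hR
      intro w hw
      set m := σ.symm (Fin.last n) with hm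
      have hσm : σ m = Fin.last n := Equiv.apply_symm_apply σ _
      have hmne : m ≠ Fin.last n := by
        intro h
        rw [h] at hσm
        exact hfix hσm
      have hmlt : m < Fin.last n := Fin.lt_last_iff_ne_last.mpr hmne
      have he : y m - y (Fin.last n) - 1 ≤ -2 := by
        have := hy hmlt; omega
      set K₀ : ℝ := ((R ^ 2 + 2 * |Δ| * R + 1) / R ^ 2)
        / ((R ^ 2 - 2 * |Δ| * R - 1) / R ^ 2) with hK₀
      have hK₀0 : 0 ≤ K₀ := by rw [hK₀]; positivity
      set S := Finset.univ.filter
        (fun p : Fin (n+1) × Fin (n+1) => p.1 < p.2 ∧ σ p.2 < σ p.1) with hS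
      set C₁ : ℝ := ∏ j ∈ Finset.univ \ {m}, R ^ (y j - y (σ j) - 1) with hC₁
      have hC₁0 : 0 ≤ C₁ := Finset.prod_nonneg fun j _ => by positivity
      set K : ℝ := K₀ ^ S.card * (R ^ (y m - y (Fin.last n) - 1 + 2) * C₁) with hKdef
      have hcoordR : ∀ t : ℂ, R ≤ Complex.abs t →
          ∀ i, R ≤ Complex.abs ((Fin.snoc w t : Fin (n+1) → ℂ) i) := by
        intro t ht i
        refine Fin.lastCases ?_ ?_ i
        · rw [Fin.snoc_last]; exact ht
        · intro j; rw [Fin.snoc_castSucc, hw j]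
      have hcoordD : ∀ i : Fin (n + 1),
          Differentiable ℂ (fun t : ℂ => (Fin.snoc w t : Fin (n+1) → ℂ) i) := by
        intro i
        refine Fin.lastCases ?_ ?_ i
        · simp only [Fin.snoc_last]; exact differentiable_id
        · intro j; simp only [Fin.snoc_castSucc]; exact differentiable_const _
      apply cInt_zero_of_decay hR _ ?_ K ?_
      · -- differentiability
        intro t ht
        apply DifferentiableAt.mul
        · apply DifferentiableAt.fun_finsetProd
          intro p _
          apply DifferentiableAt.div
          · exact ((differentiableAt_const _).add
              (((hcoordD (σ p.2)) t).mul ((hcoordD (σ p.1)) t))).sub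
              ((differentiableAt_const _).mul ((hcoordD (σ p.1)) t))
          · exact ((differentiableAt_const _).add
              (((hcoordD (σ p.2)) t).mul ((hcoordD (σ p.1)) t))).sub
              ((differentiableAt_const _).mul ((hcoordD (σ p.2)) t))
          · exact den_ne hR hR1 (hcoordR t ht (σ p.2)) (hcoordR t ht (σ p.1))
        · apply DifferentiableAt.fun_finsetProd
          intro j _
          apply DifferentiableAt.zpow ((hcoordD (σ j)) t)
          left
          intro h0
          have := hcoordR t ht (σ j)
          rw [h0] at this
          simp at this
          linarith
      · -- decay bound
        intro t ht
        have ht0 : (0 : ℝ) < Complex.abs t := lt_of_lt_of_le hR ht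
        show Complex.abs (F Δ y σ (Fin.snoc w t)) ≤ K / Complex.abs t ^ 2
        unfold F
        set Ξ : Fin (n + 1) → ℂ := Fin.snoc w t with hΞ
        have hΞR : ∀ i, R ≤ Complex.abs (Ξ i) := fun i => hcoordR t ht i
        rw [map_mul, map_prod, map_prod]
        have hP1 : (∏ p ∈ S, Complex.abs
            ((1 + Ξ (σ p.2) * Ξ (σ p.1) - 2 * (Δ : ℂ) * Ξ (σ p.1)) /
             (1 + Ξ (σ p.2) * Ξ (σ p.1) - 2 * (Δ : ℂ) * Ξ (σ p.2))))
            ≤ K₀ ^ S.card := by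
          rw [← Finset.prod_const]
          apply Finset.prod_le_prod
          · intro p _
            positivity
          · intro p _
            exact ratio_le hR hR1 (hΞR (σ p.2)) (hΞR (σ p.1))
        have hP2 : (∏ j, Complex.abs (Ξ (σ j) ^ (y j - y (σ j) - 1)))
            ≤ R ^ (y m - y (Fin.last n) - 1 + 2) / Complex.abs t ^ 2 * C₁ := by
          have hsplit : (∏ j, Complex.abs (Ξ (σ j) ^ (y j - y (σ j) - 1)))
              = Complex.abs t ^ (y m - y (Fin.last n) - 1) * C₁ := by
            rw [Finset.prod_eq_mul_prod_sdiff_singleton_of_mem (Finset.mem_univ m)]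
            congr 1
            · rw [hσm]
              rw [show Ξ (Fin.last n) = t from by rw [hΞ, Fin.snoc_last], map_zpow₀]
            · rw [hC₁]
              apply Finset.prod_congr rfl
              intro j hj
              have hjm : j ≠ m := by
                rw [Finset.mem_sdiff, Finset.mem_singleton] at hj
                exact hj.2
              have hσj : σ j ≠ Fin.last n := by
                intro h
                exact hjm (σ.injective (h.trans hσm.symm))
              obtain ⟨k, hk⟩ := Fin.exists_castSucc_eq.mpr hσj
              rw [← hk, show Ξ k.castSucc = w k from by rw [hΞ, Fin.snoc_castSucc],
                map_zpow₀, hw k]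
          rw [hsplit]
          apply mul_le_mul_of_nonneg_right _ hC₁0
          exact zpow_decay hR ht he
        calc (∏ p ∈ S, Complex.abs _) * (∏ j, Complex.abs _)
            ≤ K₀ ^ S.card * (R ^ (y m - y (Fin.last n) - 1 + 2) / Complex.abs t ^ 2 * C₁) := by
              apply mul_le_mul hP1 hP2 (Finset.prod_nonneg fun j _ => by positivity)
                (by positivity)
          _ = K / Complex.abs t ^ 2 := by
              rw [hKdef]; field_simp

end Stmt6

theorem stmt6 (Δ : ℝ) (N : ℕ) (hN : 0 < N) (y : Fin N → ℤ) (hy : StrictMono y)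
    (R : ℝ) (hR : 0 < R) (hR1 : 0 < R ^ 2 - 2 * |Δ| * R - 1) :
    (∑ σ : Equiv.Perm (Fin N),
      ((Equiv.Perm.sign σ : ℤ) : ℂ) *
        iterInt N (fun _ => cInt 0 R) fun ξ =>
          (∏ p ∈ Finset.univ.filter
              (fun p : Fin N × Fin N => p.1 < p.2 ∧ σ p.2 < σ p.1),
            (1 + ξ (σ p.2) * ξ (σ p.1) - 2 * (Δ : ℂ) * ξ (σ p.1)) /
              (1 + ξ (σ p.2) * ξ (σ p.1) - 2 * (Δ : ℂ) * ξ (σ p.2))) *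
          ∏ j, ξ (σ j) ^ (y j - y (σ j) - 1)) = 1 := by
  classical
  have key : ∀ σ : Equiv.Perm (Fin N),
      iterInt N (fun _ => cInt 0 R) (Stmt6.F Δ y σ) = if σ = 1 then 1 else 0 :=
    Stmt6.main hR hR1 N y hy
  calc (∑ σ : Equiv.Perm (Fin N),
      ((Equiv.Perm.sign σ : ℤ) : ℂ) *
        iterInt N (fun _ => cInt 0 R) fun ξ =>
          (∏ p ∈ Finset.univ.filter
              (fun p : Fin N × Fin N => p.1 < p.2 ∧ σ p.2 < σ p.1),
            (1 + ξ (σ p.2) * ξ (σ p.1) - 2 * (Δ : ℂ) * ξ (σ p.1)) /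
              (1 + ξ (σ p.2) * ξ (σ p.1) - 2 * (Δ : ℂ) * ξ (σ p.2))) *
          ∏ j, ξ (σ j) ^ (y j - y (σ j) - 1))
      = ∑ σ : Equiv.Perm (Fin N),
        ((Equiv.Perm.sign σ : ℤ) : ℂ) * (if σ = 1 then 1 else 0) := by
        apply Finset.sum_congr rfl
        intro σ _
        congr 1
        exact key σ
    _ = 1 := by
        rw [Finset.sum_eq_single 1]
        · simp
        · intro σ _ hσ
          simp [hσ]
        · intro h
          exact absurd (Finset.mem_univ _) h
end
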